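/- For every N ∈ ℕ, every 0 ≤ n ≤ N, and every g : Λ^N → ℝ with Q_N g = 0: S_{N−n}Q_{N−n}(G_N g) = L^{2(N−n)} · G_n(S_{N−n}Q_{N−n} g), where on the right-hand side G_n := Σ_{k=1}^n L^{2(k−1)} P_k acts on functions on Λ^n (note that S_{N−n}Q_{N−n} g : Λ^n → ℝ again has zero mean). -/

import Mathlib

open MeasureTheory ProbabilityTheory Filter

namespace Hier

/-! ## The hierarchical lattice

A point of the unit lattice `Λ^N = (ℤ/L^Nℤ)^d` (for `L` odd) is encoded by its
balanced base-`L` digits: the coordinate `i` of the point is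
`∑_{k<N} L^k · (x i k)`, where the digit `x i k ∈ ZMod L` is identified with its
representative in `{-(L-1)/2, …, (L-1)/2}`.  The level-`n` block `B_n(x)` is the
set of points sharing with `x` all digits of index `≥ n`, and the centre of a
level-`n` block is the point all of whose digits of index `< n` vanish. -/

variable (L d : ℕ)

/-- A point of the unit lattice `Λ^N`, in hierarchical digit coordinates. -/
abbrev Pt (N : ℕ) : Type := Fin d → Fin N → ZMod L

/-- Transport along an equality of lattice sizes. -/
def reindex {M M' : ℕ} (h : M = M') (z : Pt L d M) : Pt L d M' :=
  fun i k => z i (Fin.cast h.symm k)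

/-- Replace the `n` lowest digits of `x` by `a`; as `a` varies this enumerates
the level-`n` block `B_n(x)` of `x`. -/
def paste {N n : ℕ} (hn : n ≤ N) (x : Pt L d N) (a : Fin d → Fin n → ZMod L) :
    Pt L d N :=
  fun i k => if h : (k : ℕ) < n then a i ⟨k, h⟩ else x i k

/-- The centre of the level-`m` block of `Λ^N` indexed by `z ∈ Λ^{N-m}` (the
point `L^m z`). -/
def embed {N m : ℕ} (hm : m ≤ N) (z : Pt L d (N - m)) : Pt L d N :=
  fun i k =>
    if h : m ≤ (k : ℕ) then z i ⟨(k : ℕ) - m, by have := k.isLt; omega⟩ else 0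

variable [NeZero L]

/-- The averaging operator `Q_n g (x) = L^{-nd} ∑_{y ∈ B_n(x)} g(y)`. -/
noncomputable def Qop {N : ℕ} (n : ℕ) (hn : n ≤ N) (g : Pt L d N → ℝ) :
    Pt L d N → ℝ :=
  fun x => ((L : ℝ) ^ (n * d))⁻¹ * ∑ a : Fin d → Fin n → ZMod L, g (paste L d hn x a)

/-- The fluctuation operator `P_n = Q_{n-1} - Q_n` (for `1 ≤ n ≤ N`). -/
noncomputable def Pop {N : ℕ} (n : ℕ) (hn : n ≤ N) (g : Pt L d N → ℝ) :
    Pt L d N → ℝ :=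
  fun x => Qop L d (n - 1) (le_trans (Nat.sub_le n 1) hn) g x - Qop L d n hn g x

/-- The rescaling `S_m`, sending `f : Λ^N → ℝ` to `S_m f : Λ^{N-m} → ℝ`,
`(S_m f)(z) = f(L^m z)`.  In particular `scale … (Qop …)` is the coarse
graining `S_m Q_m`. -/
noncomputable def scale {N m : ℕ} (hm : m ≤ N) (f : Pt L d N → ℝ) :
    Pt L d (N - m) → ℝ :=
  fun z => f (embed L d hm z)

/-- The hierarchical Green operator `G_N = ∑_{k=1}^N L^{2(k-1)} P_k`. -/
noncomputable def green (N : ℕ) (g : Pt L d N → ℝ) : Pt L d N → ℝ :=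
  fun x => ∑ k : Fin N, (L : ℝ) ^ (2 * (k : ℕ)) * Pop L d ((k : ℕ) + 1) k.isLt g x

/-- The (negative of the) hierarchical Laplacian
`(-Δ_{H,N}) = ∑_{n=1}^N L^{-2(n-1)} P_n`. -/
noncomputable def lap (N : ℕ) (g : Pt L d N → ℝ) : Pt L d N → ℝ :=
  fun x => ∑ k : Fin N, ((L : ℝ) ^ (2 * (k : ℕ)))⁻¹ * Pop L d ((k : ℕ) + 1) k.isLt g x

/-- The fluctuation propagator `Γ_m = ∑_{k=1}^m L^{2(k-1)} P_k` acting on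
functions on `Λ^N` (`m ≤ N`). -/
noncomputable def gammaProp {N : ℕ} (m : ℕ) (hm : m ≤ N) (g : Pt L d N → ℝ) :
    Pt L d N → ℝ :=
  fun x => ∑ k : Fin m, (L : ℝ) ^ (2 * (k : ℕ)) *
    Pop L d ((k : ℕ) + 1) (le_trans k.isLt hm) g x

/-- `x` and `y` lie in the same level-`m` block of `Λ^N`. -/
def sameBlock {N : ℕ} (m : ℕ) (x y : Pt L d N) : Prop :=
  ∀ (i : Fin d) (k : Fin N), m ≤ (k : ℕ) → x i k = y i k

end Hier


section Aux
open Hier Finset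

variable (L d : ℕ)

lemma card_digits [NeZero L] (p : ℕ) :
    (Fintype.card (Fin d → Fin p → ZMod L) : ℝ) = (L : ℝ) ^ (p * d) := by
  rw [Fintype.card_fun, Fintype.card_fun, ZMod.card, Fintype.card_fin, Fintype.card_fin,
    ← pow_mul]
  push_cast
  ring

lemma Lpow_ne [NeZero L] (e : ℕ) : ((L : ℝ) ^ e) ≠ 0 :=
  pow_ne_zero _ (Nat.cast_ne_zero.mpr (NeZero.ne L))

lemma Qop_blockconst [NeZero L] {N q : ℕ} (hq : q ≤ N) (f : Pt L d N → ℝ) (x : Pt L d N)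
    (h : ∀ a, f (paste L d hq x a) = f x) : Qop L d q hq f x = f x := by
  unfold Qop
  rw [Finset.sum_congr rfl fun a _ => h a, Finset.sum_const, Finset.card_univ,
    nsmul_eq_mul, ← mul_assoc, card_digits, inv_mul_cancel₀ (Lpow_ne L (q * d)), one_mul]

lemma Qop_congr_block [NeZero L] {N p : ℕ} (hp : p ≤ N) (g : Pt L d N → ℝ)
    {x y : Pt L d N} (h : ∀ (i : Fin d) (k : Fin N), p ≤ (k : ℕ) → x i k = y i k) :
    Qop L d p hp g x = Qop L d p hp g y := by
  unfold Qop
  congr 1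
  refine Finset.sum_congr rfl fun a _ => ?_
  congr 1
  funext i k
  by_cases hk : (k : ℕ) < p
  · simp [paste, hk]
  · simp only [paste, dif_neg hk]
    exact h i k (by omega)

lemma Qop_Qop_big_inner [NeZero L] {N p q : ℕ} (hqp : q ≤ p) (hp : p ≤ N) (g : Pt L d N → ℝ)
    (x : Pt L d N) :
    Qop L d q (hqp.trans hp) (Qop L d p hp g) x = Qop L d p hp g x := by
  apply Qop_blockconst
  intro a
  apply Qop_congr_block
  intro i k hk
  simp [paste, Nat.not_lt.mpr (hqp.trans hk)]

end Aux
section Aux2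
open Hier Finset

variable (L d : ℕ)

/-- Merge digit blocks: low `p` digits from `b`, the rest from `a`. -/
def merge {p q : ℕ} (a : Fin d → Fin q → ZMod L) (b : Fin d → Fin p → ZMod L) :
    Fin d → Fin q → ZMod L :=
  fun i k => if h : (k : ℕ) < p then b i ⟨k, h⟩ else a i k

def low (p : ℕ) {q : ℕ} (hpq : p ≤ q) (a : Fin d → Fin q → ZMod L) :
    Fin d → Fin p → ZMod L :=
  fun i t => a i ⟨t, t.isLt.trans_le hpq⟩

lemma paste_paste {N p q : ℕ} (hpq : p ≤ q) (hq : q ≤ N) (x : Pt L d N)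
    (a : Fin d → Fin q → ZMod L) (b : Fin d → Fin p → ZMod L) :
    paste L d (hpq.trans hq) (paste L d hq x a) b = paste L d hq x (merge L d a b) := by
  funext i k
  simp only [paste, merge]
  by_cases h1 : (k : ℕ) < p
  · rw [dif_pos h1, dif_pos (h1.trans_le hpq), dif_pos h1]
  · rw [dif_neg h1]
    by_cases h2 : (k : ℕ) < q
    · rw [dif_pos h2, dif_pos h2, dif_neg h1]
    · rw [dif_neg h2, dif_neg h2]

lemma merge_involutive {p q : ℕ} (hpq : p ≤ q) :
    Function.Involutive (fun ab : (Fin d → Fin q → ZMod L) × (Fin d → Fin p → ZMod L) =>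
      (merge L d ab.1 ab.2, low L d p hpq ab.1)) := by
  rintro ⟨a, b⟩
  simp only [Prod.mk.injEq]
  constructor
  · funext i k
    by_cases h : (k : ℕ) < p
    · simp only [merge, low, dif_pos h]
    · simp only [merge, dif_neg h]
  · funext i t
    simp only [merge, low, dif_pos t.isLt]

lemma Qop_Qop_small_inner [NeZero L] {N p q : ℕ} (hpq : p ≤ q) (hq : q ≤ N)
    (g : Pt L d N → ℝ) (x : Pt L d N) :
    Qop L d q hq (Qop L d p (hpq.trans hq) g) x = Qop L d q hq g x := by
  unfold Qop
  calc ((L : ℝ) ^ (q * d))⁻¹ *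
        ∑ a : Fin d → Fin q → ZMod L, ((L : ℝ) ^ (p * d))⁻¹ *
          ∑ b : Fin d → Fin p → ZMod L, g (paste L d (hpq.trans hq) (paste L d hq x a) b)
      = ((L : ℝ) ^ (q * d))⁻¹ * (((L : ℝ) ^ (p * d))⁻¹ *
          ∑ ab : (Fin d → Fin q → ZMod L) × (Fin d → Fin p → ZMod L),
            g (paste L d hq x (merge L d ab.1 ab.2))) := by
        rw [← Finset.mul_sum, Fintype.sum_prod_type]
        congr 2
        refine Finset.sum_congr rfl fun a _ => Finset.sum_congr rfl fun b _ => ?_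
        rw [paste_paste L d hpq hq]
    _ = ((L : ℝ) ^ (q * d))⁻¹ * (((L : ℝ) ^ (p * d))⁻¹ *
          ∑ ab : (Fin d → Fin q → ZMod L) × (Fin d → Fin p → ZMod L),
            g (paste L d hq x ab.1)) := by
        congr 1
        congr 1
        exact Fintype.sum_equiv ((merge_involutive L d hpq).toPerm) _ _ (fun ab => rfl)
    _ = ((L : ℝ) ^ (q * d))⁻¹ * ∑ a : Fin d → Fin q → ZMod L, g (paste L d hq x a) := by
        rw [Fintype.sum_prod_type]
        congr 1
        simp only [Finset.sum_const, Finset.card_univ, nsmul_eq_mul, ← Finset.mul_sum]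
        rw [← mul_assoc, card_digits, inv_mul_cancel₀ (Lpow_ne L (p * d)), one_mul]

end Aux2
section Aux3
open Hier Finset

variable (L d : ℕ)

def joinFun {m j : ℕ} (cb : (Fin d → Fin j → ZMod L) × (Fin d → Fin m → ZMod L)) :
    Fin d → Fin (m + j) → ZMod L :=
  fun i k => if h : (k : ℕ) < m then cb.2 i ⟨k, h⟩
    else cb.1 i ⟨(k : ℕ) - m, by have := k.isLt; omega⟩

def splitEquiv (m j : ℕ) :
    ((Fin d → Fin j → ZMod L) × (Fin d → Fin m → ZMod L)) ≃ (Fin d → Fin (m + j) → ZMod L) where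
  toFun := joinFun L d
  invFun A := (fun i t => A i ⟨m + (t : ℕ), by omega⟩, fun i t => A i ⟨(t : ℕ), by omega⟩)
  left_inv := by
    rintro ⟨c, b⟩
    simp only [Prod.mk.injEq]
    constructor
    · funext i t
      simp only [joinFun]
      rw [dif_neg (by omega)]
      congr 1
      ext
      simp
    · funext i t
      simp only [joinFun]
      rw [dif_pos t.isLt]
  right_inv := by
    intro A
    funext i k
    simp only [joinFun]
    by_cases h : (k : ℕ) < m
    · rw [dif_pos h]
    · rw [dif_neg h]
      congr 1
      ext
      simp only []
      omega

lemma point_id {N n m : ℕ} (hmn : m + n = N) (hc : n = N - m) (hmN : m ≤ N)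
    {j : ℕ} (hj : j ≤ n) (z : Pt L d n)
    (c : Fin d → Fin j → ZMod L) (b : Fin d → Fin m → ZMod L) :
    paste L d hmN (embed L d hmN (reindex L d hc (paste L d hj z c))) b
      = paste L d (show m + j ≤ N by omega)
          (embed L d hmN (reindex L d hc z)) (joinFun L d (c, b)) := by
  funext i k
  simp only [paste, embed, reindex, joinFun, Fin.coe_cast]
  by_cases h1 : (k : ℕ) < m
  · rw [dif_pos h1, dif_pos (by omega)]
    rw [dif_pos (show ((⟨(k : ℕ), by omega⟩ : Fin (m + j)) : ℕ) < m from h1)]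
  · rw [dif_neg h1, dif_pos (show m ≤ (k : ℕ) by omega)]
    by_cases h2 : (k : ℕ) < m + j
    · rw [dif_pos h2]
      rw [dif_neg (show ¬ ((⟨(k : ℕ), h2⟩ : Fin (m + j)) : ℕ) < m from h1)]
      rw [dif_pos (show (k : ℕ) - m < j by omega)]
    · rw [dif_neg h2, dif_pos (show m ≤ (k : ℕ) by omega)]
      rw [dif_neg (show ¬ (k : ℕ) - m < j by omega)]

lemma coarse [NeZero L] {N n m : ℕ} (hmn : m + n = N) (hc : n = N - m) (hmN : m ≤ N)
    {j : ℕ} (hj : j ≤ n) (g : Pt L d N → ℝ) (z : Pt L d n) :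
    Qop L d j hj (fun w : Pt L d n => Qop L d m hmN g (embed L d hmN (reindex L d hc w))) z
      = Qop L d (m + j) (show m + j ≤ N by omega) g (embed L d hmN (reindex L d hc z)) := by
  unfold Qop
  calc ((L : ℝ) ^ (j * d))⁻¹ * ∑ c : Fin d → Fin j → ZMod L, ((L : ℝ) ^ (m * d))⁻¹ *
        ∑ b : Fin d → Fin m → ZMod L,
          g (paste L d hmN (embed L d hmN (reindex L d hc (paste L d hj z c))) b)
      = ((L : ℝ) ^ (j * d))⁻¹ * (((L : ℝ) ^ (m * d))⁻¹ *
          ∑ cb : (Fin d → Fin j → ZMod L) × (Fin d → Fin m → ZMod L),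
            g (paste L d (show m + j ≤ N by omega)
                (embed L d hmN (reindex L d hc z)) (joinFun L d cb))) := by
        rw [← Finset.mul_sum, Fintype.sum_prod_type]
        congr 2
        refine Finset.sum_congr rfl fun c _ => Finset.sum_congr rfl fun b _ => ?_
        rw [point_id L d hmn hc hmN hj]
    _ = ((L : ℝ) ^ ((m + j) * d))⁻¹ * ∑ A : Fin d → Fin (m + j) → ZMod L,
          g (paste L d (show m + j ≤ N by omega) (embed L d hmN (reindex L d hc z)) A) := by
        rw [← mul_assoc, ← mul_inv, ← pow_add, show j * d + m * d = (m + j) * d by ring]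
        congr 1
        exact Fintype.sum_bijective (splitEquiv L d m j) (splitEquiv L d m j).bijective _ _
          (fun cb => rfl)

lemma Qop_sum [NeZero L] {N p : ℕ} (hp : p ≤ N) {ι : Type*} (s : Finset ι)
    (F : ι → Pt L d N → ℝ) (x : Pt L d N) :
    Qop L d p hp (fun y => ∑ k ∈ s, F k y) x = ∑ k ∈ s, Qop L d p hp (F k) x := by
  simp only [Qop]
  rw [Finset.sum_comm, Finset.mul_sum]

lemma Qop_smul [NeZero L] {N p : ℕ} (hp : p ≤ N) (r : ℝ) (F : Pt L d N → ℝ) (x : Pt L d N) :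
    Qop L d p hp (fun y => r * F y) x = r * Qop L d p hp F x := by
  simp only [Qop, ← Finset.mul_sum]
  ring

lemma Qop_sub [NeZero L] {N p : ℕ} (hp : p ≤ N) (F G : Pt L d N → ℝ) (x : Pt L d N) :
    Qop L d p hp (fun y => F y - G y) x = Qop L d p hp F x - Qop L d p hp G x := by
  simp only [Qop, Finset.sum_sub_distrib, mul_sub]

/-- `Qop` with the constraint as a `dite`, as a function of the plain level. -/
noncomputable def Adite [NeZero L] (N : ℕ) (g : Pt L d N → ℝ) (X : Pt L d N) (p : ℕ) : ℝ :=
  if h : p ≤ N then Qop L d p h g X else 0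

lemma Adite_of_le [NeZero L] {N : ℕ} (g : Pt L d N → ℝ) (X : Pt L d N) {p : ℕ}
    (h : p ≤ N) : Adite L d N g X p = Qop L d p h g X := dif_pos h

end Aux3
section Aux4
open Hier Finset

variable (L d : ℕ)

lemma Qop_Pop [NeZero L] {N p k : ℕ} (hp : p ≤ N) (hk1 : k + 1 ≤ N) (g : Pt L d N → ℝ)
    (x : Pt L d N) :
    Qop L d p hp (Pop L d (k + 1) hk1 g) x
      = if p ≤ k then Qop L d k (by omega) g x - Qop L d (k + 1) hk1 g x else 0 := by
  have hk : k ≤ N := by omega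
  have hsplit : Qop L d p hp (Pop L d (k + 1) hk1 g) x
      = Qop L d p hp (Qop L d k hk g) x - Qop L d p hp (Qop L d (k + 1) hk1 g) x := by
    have hrw : Pop L d (k + 1) hk1 g
        = fun y => Qop L d k hk g y - Qop L d (k + 1) hk1 g y := rfl
    rw [hrw, Qop_sub]
  rw [hsplit]
  by_cases h : p ≤ k
  · rw [if_pos h]
    have e1 : Qop L d p hp (Qop L d k hk g) x = Qop L d k hk g x :=
      Qop_Qop_big_inner L d h hk g x
    have e2 : Qop L d p hp (Qop L d (k + 1) hk1 g) x = Qop L d (k + 1) hk1 g x :=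
      Qop_Qop_big_inner L d (by omega) hk1 g x
    rw [e1, e2]
  · rw [if_neg h]
    have e1 : Qop L d p hp (Qop L d k hk g) x = Qop L d p hp g x :=
      Qop_Qop_small_inner L d (by omega) hp g x
    have e2 : Qop L d p hp (Qop L d (k + 1) hk1 g) x = Qop L d p hp g x :=
      Qop_Qop_small_inner L d (by omega) hp g x
    rw [e1, e2, sub_self]

lemma main_aux [NeZero L] {N n m : ℕ} (hmn : m + n = N) (hc : n = N - m)
    (hmN : m ≤ N) (g : Pt L d N → ℝ) (z : Pt L d n) :
    Qop L d m hmN (green L d N g) (embed L d hmN (reindex L d hc z))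
      = (L : ℝ) ^ (2 * m) *
          green L d n (fun w : Pt L d n =>
            Qop L d m hmN g (embed L d hmN (reindex L d hc w))) z := by
  classical
  set X : Pt L d N := embed L d hmN (reindex L d hc z) with hX
  set hfun : Pt L d n → ℝ :=
    (fun w : Pt L d n => Qop L d m hmN g (embed L d hmN (reindex L d hc w))) with hfun_def
  have lhs1 : Qop L d m hmN (green L d N g) X
      = ∑ k ∈ Finset.range N, (if m ≤ k then (L : ℝ) ^ (2 * k) *
          (Adite L d N g X k - Adite L d N g X (k + 1)) else 0) := by
    calc Qop L d m hmN (green L d N g) X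
        = ∑ k : Fin N, Qop L d m hmN
            (fun x => (L : ℝ) ^ (2 * (k : ℕ)) * Pop L d ((k : ℕ) + 1) k.isLt g x) X :=
          Qop_sum L d hmN Finset.univ _ X
      _ = ∑ k : Fin N, (L : ℝ) ^ (2 * (k : ℕ)) *
            Qop L d m hmN (Pop L d ((k : ℕ) + 1) k.isLt g) X :=
          Finset.sum_congr rfl fun k _ => Qop_smul L d hmN _ _ X
      _ = ∑ k : Fin N, (if m ≤ (k : ℕ) then (L : ℝ) ^ (2 * (k : ℕ)) *
            (Adite L d N g X (k : ℕ) - Adite L d N g X ((k : ℕ) + 1)) else 0) := by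
          refine Finset.sum_congr rfl fun k _ => ?_
          rw [Qop_Pop L d hmN k.isLt g X]
          by_cases h : m ≤ (k : ℕ)
          · rw [if_pos h, if_pos h,
              Adite_of_le L d g X (show (k : ℕ) ≤ N by omega),
              Adite_of_le L d g X (show (k : ℕ) + 1 ≤ N from k.isLt)]
          · rw [if_neg h, if_neg h, mul_zero]
      _ = ∑ k ∈ Finset.range N, (if m ≤ k then (L : ℝ) ^ (2 * k) *
            (Adite L d N g X k - Adite L d N g X (k + 1)) else 0) :=
          Fin.sum_univ_eq_sum_range (fun k => if m ≤ k then (L : ℝ) ^ (2 * k) *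
            (Adite L d N g X k - Adite L d N g X (k + 1)) else 0) N
  have lhs2 : (∑ k ∈ Finset.range N, (if m ≤ k then (L : ℝ) ^ (2 * k) *
          (Adite L d N g X k - Adite L d N g X (k + 1)) else 0))
      = ∑ j ∈ Finset.range n, (L : ℝ) ^ (2 * (m + j)) *
          (Adite L d N g X (m + j) - Adite L d N g X (m + j + 1)) := by
    rw [Finset.range_eq_Ico, ← Finset.sum_Ico_consecutive _ (Nat.zero_le m) hmN,
      Finset.sum_eq_zero (fun k hk => if_neg (by
        rw [Finset.mem_Ico] at hk; omega)), zero_add,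
      Finset.sum_Ico_eq_sum_range, show N - m = n by omega]
    exact Finset.sum_congr rfl fun j _ => if_pos (Nat.le_add_right m j)
  have bridge : ∀ j : ℕ, j ≤ n → Adite L d N g X (m + j) = Adite L d n hfun z j := by
    intro j hj
    rw [Adite_of_le L d g X (show m + j ≤ N by omega), Adite_of_le L d hfun z hj]
    exact (coarse L d hmn hc hmN hj g z).symm
  have rhs1 : green L d n hfun z = ∑ j ∈ Finset.range n, (L : ℝ) ^ (2 * j) *
      (Adite L d n hfun z j - Adite L d n hfun z (j + 1)) := by
    calc green L d n hfun z
        = ∑ j : Fin n, (L : ℝ) ^ (2 * (j : ℕ)) * Pop L d ((j : ℕ) + 1) j.isLt hfun z := rfl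
      _ = ∑ j : Fin n, (L : ℝ) ^ (2 * (j : ℕ)) *
            (Adite L d n hfun z (j : ℕ) - Adite L d n hfun z ((j : ℕ) + 1)) := by
          refine Finset.sum_congr rfl fun j _ => ?_
          congr 1
          have hrw : Pop L d ((j : ℕ) + 1) j.isLt hfun z
              = Qop L d (j : ℕ) (le_of_lt j.isLt) hfun z
                - Qop L d ((j : ℕ) + 1) j.isLt hfun z := rfl
          rw [hrw, Adite_of_le L d hfun z (le_of_lt j.isLt), Adite_of_le L d hfun z j.isLt]
      _ = ∑ j ∈ Finset.range n, (L : ℝ) ^ (2 * j) *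
            (Adite L d n hfun z j - Adite L d n hfun z (j + 1)) :=
          Fin.sum_univ_eq_sum_range (fun j => (L : ℝ) ^ (2 * j) *
            (Adite L d n hfun z j - Adite L d n hfun z (j + 1))) n
  calc Qop L d m hmN (green L d N g) X
      = ∑ j ∈ Finset.range n, (L : ℝ) ^ (2 * (m + j)) *
          (Adite L d N g X (m + j) - Adite L d N g X (m + j + 1)) := by rw [lhs1, lhs2]
    _ = ∑ j ∈ Finset.range n, (L : ℝ) ^ (2 * m) * ((L : ℝ) ^ (2 * j) *
          (Adite L d n hfun z j - Adite L d n hfun z (j + 1))) := by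
        refine Finset.sum_congr rfl fun j hj => ?_
        rw [Finset.mem_range] at hj
        rw [show m + j + 1 = m + (j + 1) by omega,
          bridge j (by omega), bridge (j + 1) (by omega),
          show 2 * (m + j) = 2 * m + 2 * j by ring, pow_add, mul_assoc]
    _ = (L : ℝ) ^ (2 * m) * green L d n hfun z := by
        rw [rhs1, Finset.mul_sum]

end Aux4

open Hier in
/-- For every `N ∈ ℕ`, every `0 ≤ n ≤ N` and every
`g : Λ^N → ℝ` with `Q_N g = 0`:
`S_{N-n} Q_{N-n} (G_N g) = L^{2(N-n)} · G_n (S_{N-n} Q_{N-n} g)`,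
where the right-hand Green operator `G_n` acts on functions on `Λ^n`
(identified with `Λ^{N-(N-n)}` via `reindex`). -/
theorem statement_3 (L d : ℕ) [NeZero L] (hL : Odd L) (hL3 : 3 ≤ L) (hd : 1 ≤ d)
    (N n : ℕ) (hn : n ≤ N) (g : Pt L d N → ℝ)
    (hg : ∀ x, Qop L d N le_rfl g x = 0) :
    ∀ z : Pt L d n,
      scale L d (Nat.sub_le N n)
          (Qop L d (N - n) (Nat.sub_le N n) (green L d N g))
          (reindex L d (show n = N - (N - n) by omega) z) =
        (L : ℝ) ^ (2 * (N - n)) *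
          green L d n (fun w : Pt L d n =>
            scale L d (Nat.sub_le N n)
              (Qop L d (N - n) (Nat.sub_le N n) g)
              (reindex L d (show n = N - (N - n) by omega) w)) z := by
  intro z
  exact main_aux L d (N := N) (n := n) (m := N - n) (by omega) (by omega)
    (Nat.sub_le N n) g z
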